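/- Let ι : X → X' be an incidence embedding, w' an acyclic partial matching on X', and w the pulled-back partial matching (w(ξ) = ι⁻¹(w'(ι(ξ))) when w'(ι(ξ)) ∈ ι(X), else w(ξ) = ξ). Then w is acyclic. -/

import Mathlib

/-- Pulling back an acyclic partial matching along an incidence embedding yields
an acyclic partial matching. -/
theorem pullback_acyclic {X X' : Type} [Fintype X] [PartialOrder X]
    [Fintype X'] [PartialOrder X']
    (dim : X → ℕ) (hdim : Monotone dim)
    (dim' : X' → ℕ) (hdim' : Monotone dim')
    (prec : X → X → Prop)
    (hprec : ∀ ξ' ξ, prec ξ' ξ → ξ' ≤ ξ ∧ dim ξ = dim ξ' + 1)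
    (prec' : X' → X' → Prop)
    (hprec' : ∀ η' η, prec' η' η → η' ≤ η ∧ dim' η = dim' η' + 1)
    (ι : X → X') (hinj : Function.Injective ι)
    (hembed : ∀ ξ' ξ, prec ξ' ξ ↔ prec' (ι ξ') (ι ξ))
    (w' : X' → X')
    (hinv' : ∀ η, w' (w' η) = η)
    (htri' : ∀ η, w' η = η ∨ prec' η (w' η) ∨ prec' (w' η) η)
    (hacyc' : ∀ η, ¬ Relation.TransGen
      (fun η₁ η₀ => prec' η₁ (w' η₀) ∧ η₁ ≠ η₀ ∧
        prec' η₀ (w' η₀) ∧ prec' η₁ (w' η₁)) η η)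
    (w : X → X)
    (hw : ∀ ξ, (w' (ι ξ) ∈ Set.range ι → ι (w ξ) = w' (ι ξ)) ∧
               (w' (ι ξ) ∉ Set.range ι → w ξ = ξ)) :
    ∀ ξ, ¬ Relation.TransGen
      (fun ξ₁ ξ₀ => prec ξ₁ (w ξ₀) ∧ ξ₁ ≠ ξ₀ ∧
        prec ξ₀ (w ξ₀) ∧ prec ξ₁ (w ξ₁)) ξ ξ := by
  intro ξ h
  have key : ∀ ζ, prec ζ (w ζ) → ι (w ζ) = w' (ι ζ) := by
    intro ζ hζ
    rcases (hw ζ) with ⟨h1, h2⟩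
    by_cases hr : w' (ι ζ) ∈ Set.range ι
    · exact h1 hr
    · exfalso
      have hz := h2 hr
      rw [hz] at hζ
      have := (hprec ζ ζ hζ).2
      omega
  have lift : ∀ a b, (fun ξ₁ ξ₀ => prec ξ₁ (w ξ₀) ∧ ξ₁ ≠ ξ₀ ∧
        prec ξ₀ (w ξ₀) ∧ prec ξ₁ (w ξ₁)) a b →
      (fun η₁ η₀ => prec' η₁ (w' η₀) ∧ η₁ ≠ η₀ ∧
        prec' η₀ (w' η₀) ∧ prec' η₁ (w' η₁)) (ι a) (ι b) := by
    intro a b ⟨h1, h2, h3, h4⟩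
    have eb := key b h3
    have ea := key a h4
    refine ⟨?_, fun hne => h2 (hinj hne), ?_, ?_⟩
    · rw [← eb]; exact (hembed a (w b)).1 h1
    · rw [← eb]; exact (hembed b (w b)).1 h3
    · rw [← ea]; exact (hembed a (w a)).1 h4
  exact hacyc' (ι ξ) (Relation.TransGen.lift ι lift ξ ξ h)
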